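/- Let Q be a unital quantale and φ : (A,𝔸) ⇸ (B,𝔹) a Q-distributor between Q-preordered sets. Define φ↑(μ)(y) := ⨅_{x∈A} φ(x,y)/μ(x) for μ : A→Q and φ↓(λ)(x) := ⨅_{y∈B} λ(y)∖φ(x,y) for λ : B→Q. Then: (1) φ↑ sends contravariant presheaves on 𝔸 to covariant presheaves on 𝔹, and φ↓ sends covariant presheaves on 𝔹 to contravariant presheaves on 𝔸; (2) (Isbell adjunction) for every contravariant presheaf μ on 𝔸 and every covariant presheaf λ on 𝔹, P†B(φ↑μ, λ) = PA(μ, φ↓λ), i.e., ⨅_{y∈B} λ(y)∖φ↑(μ)(y) = ⨅_{x∈A} φ↓(λ)(x)/μ(x). -/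
import Mathlib


universe u

/-- A unital quantale: a complete lattice with a monoid structure whose multiplication
preserves arbitrary suprema in each variable. -/
class UnitalQuantale (Q : Type u) extends CompleteLattice Q, Monoid Q where
  mul_sSup : ∀ (a : Q) (S : Set Q), a * sSup S = ⨆ b ∈ S, a * b
  sSup_mul : ∀ (S : Set Q) (a : Q), sSup S * a = ⨆ b ∈ S, b * a

variable {Q : Type u} [UnitalQuantale Q]

/-- The left residual `b / a = ⨆ {c | c * a ≤ b}`. -/
def qdivr (b a : Q) : Q := sSup {c : Q | c * a ≤ b}

/-- The right residual `a ∖ b = ⨆ {c | a * c ≤ b}`. -/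
def qdivl (a b : Q) : Q := sSup {c : Q | a * c ≤ b}

lemma q_mul_le_mul_left {a b : Q} (c : Q) (h : a ≤ b) : c * a ≤ c * b := by
  have : c * sSup {a, b} = ⨆ x ∈ ({a, b} : Set Q), c * x := UnitalQuantale.mul_sSup c _
  have hs : sSup ({a, b} : Set Q) = b := by
    simp [sSup_insert, sup_eq_right.mpr h]
  rw [hs] at this
  rw [this]
  exact le_iSup₂_of_le a (by simp) le_rfl

lemma q_mul_le_mul_right {a b : Q} (c : Q) (h : a ≤ b) : a * c ≤ b * c := by
  have : sSup ({a, b} : Set Q) * c = ⨆ x ∈ ({a, b} : Set Q), x * c := UnitalQuantale.sSup_mul _ c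
  have hs : sSup ({a, b} : Set Q) = b := by
    simp [sSup_insert, sup_eq_right.mpr h]
  rw [hs] at this
  rw [this]
  exact le_iSup₂_of_le a (by simp) le_rfl

lemma le_qdivr_iff {a b c : Q} : c ≤ qdivr b a ↔ c * a ≤ b := by
  constructor
  · intro h
    calc c * a ≤ qdivr b a * a := q_mul_le_mul_right a h
      _ = ⨆ x ∈ {c : Q | c * a ≤ b}, x * a := UnitalQuantale.sSup_mul _ a
      _ ≤ b := by exact iSup₂_le fun x hx => hx
  · intro h; exact le_sSup h

lemma le_qdivl_iff {a b c : Q} : c ≤ qdivl a b ↔ a * c ≤ b := by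
  constructor
  · intro h
    calc a * c ≤ a * qdivl a b := q_mul_le_mul_left a h
      _ = ⨆ x ∈ {c : Q | a * c ≤ b}, a * x := UnitalQuantale.mul_sSup a _
      _ ≤ b := by exact iSup₂_le fun x hx => hx
  · intro h; exact le_sSup h

/-- The Isbell adjunction `φ↑ ⊣ φ↓` induced by a `Q`-distributor
(Proposition `uphi-dphi-adjunction`). -/
theorem qdistributor_isbell_adjunction {A B : Type*}
    (𝔸 : A → A → Q) (𝔹 : B → B → Q)
    (hArefl : ∀ x, (1 : Q) ≤ 𝔸 x x)
    (hAtrans : ∀ x y z, 𝔸 y z * 𝔸 x y ≤ 𝔸 x z)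
    (hBrefl : ∀ y, (1 : Q) ≤ 𝔹 y y)
    (hBtrans : ∀ x y z, 𝔹 y z * 𝔹 x y ≤ 𝔹 x z)
    (φ : A → B → Q)
    (hφ1 : ∀ x y y', 𝔹 y y' * φ x y ≤ φ x y')
    (hφ2 : ∀ x x' y, φ x' y * 𝔸 x x' ≤ φ x y) :
    -- (1) φ↑ sends contravariant presheaves on 𝔸 to covariant presheaves on 𝔹,
    --     φ↓ sends covariant presheaves on 𝔹 to contravariant presheaves on 𝔸
    ((∀ μ : A → Q, (∀ x x', μ x' * 𝔸 x x' ≤ μ x) →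
        ∀ y y', 𝔹 y y' * (⨅ x, qdivr (φ x y) (μ x)) ≤ ⨅ x, qdivr (φ x y') (μ x)) ∧
      (∀ lam : B → Q, (∀ y y', 𝔹 y y' * lam y ≤ lam y') →
        ∀ x x', (⨅ y, qdivl (lam y) (φ x' y)) * 𝔸 x x' ≤ ⨅ y, qdivl (lam y) (φ x y))) ∧
    -- (2) the Isbell adjunction: P†B(φ↑μ, λ) = PA(μ, φ↓λ)
    (∀ (μ : A → Q) (lam : B → Q),
        (∀ x x', μ x' * 𝔸 x x' ≤ μ x) → (∀ y y', 𝔹 y y' * lam y ≤ lam y') →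
        (⨅ y, qdivl (lam y) (⨅ x, qdivr (φ x y) (μ x))) =
          ⨅ x, qdivr (⨅ y, qdivl (lam y) (φ x y)) (μ x)) := by
  refine ⟨⟨?_, ?_⟩, ?_⟩
  · intro μ hμ y y'
    refine le_iInf fun x => le_qdivr_iff.mpr ?_
    calc 𝔹 y y' * (⨅ x, qdivr (φ x y) (μ x)) * μ x
        = 𝔹 y y' * ((⨅ x, qdivr (φ x y) (μ x)) * μ x) := mul_assoc _ _ _
      _ ≤ 𝔹 y y' * φ x y :=
          q_mul_le_mul_left _ (le_qdivr_iff.mp (iInf_le _ x))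
      _ ≤ φ x y' := hφ1 x y y'
  · intro lam hlam x x'
    refine le_iInf fun y => le_qdivl_iff.mpr ?_
    calc lam y * ((⨅ y, qdivl (lam y) (φ x' y)) * 𝔸 x x')
        = lam y * (⨅ y, qdivl (lam y) (φ x' y)) * 𝔸 x x' := (mul_assoc _ _ _).symm
      _ ≤ φ x' y * 𝔸 x x' :=
          q_mul_le_mul_right _ (le_qdivl_iff.mp (iInf_le _ y))
      _ ≤ φ x y := hφ2 x x' y
  · intro μ lam hμ hlam
    have key : ∀ c : Q, (c ≤ ⨅ y, qdivl (lam y) (⨅ x, qdivr (φ x y) (μ x))) ↔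
        (c ≤ ⨅ x, qdivr (⨅ y, qdivl (lam y) (φ x y)) (μ x)) := by
      intro c
      constructor
      · intro h
        refine le_iInf fun x => le_qdivr_iff.mpr (le_iInf fun y => le_qdivl_iff.mpr ?_)
        have h1 : lam y * c ≤ ⨅ x, qdivr (φ x y) (μ x) := le_qdivl_iff.mp (h.trans (iInf_le _ y))
        have h2 : (lam y * c) * μ x ≤ φ x y := le_qdivr_iff.mp (h1.trans (iInf_le _ x))
        calc lam y * (c * μ x) = lam y * c * μ x := (mul_assoc _ _ _).symm
          _ ≤ φ x y := h2
      · intro h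
        refine le_iInf fun y => le_qdivl_iff.mpr (le_iInf fun x => le_qdivr_iff.mpr ?_)
        have h1 : c * μ x ≤ ⨅ y, qdivl (lam y) (φ x y) := le_qdivr_iff.mp (h.trans (iInf_le _ x))
        have h2 : lam y * (c * μ x) ≤ φ x y := le_qdivl_iff.mp (h1.trans (iInf_le _ y))
        calc lam y * c * μ x = lam y * (c * μ x) := mul_assoc _ _ _
          _ ≤ φ x y := h2
    exact le_antisymm ((key _).mp le_rfl) ((key _).mpr le_rfl)
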